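/- Let k ≥ k_0. Then f − f_min ∈ Ideal[h]_{spa,2k} + Pre[g]_{spa,2k} if and only if there exist polynomials p_1,…,p_m with p_i ∈ ℝ[x_{Δ_i}] such that p_1 + ⋯ + p_m + f_min = 0 and f_i + p_i ∈ Ideal_{Δ_i}[h_i]_{2k} + Pre_{Δ_i}[g_i]_{2k} for every i ∈ {1,…,m}. -/
import Mathlib


open MvPolynomial Pointwise

noncomputable section

/-- A polynomial is a sum of squares of polynomials supported in `Δ`. -/
def IsSOSIn (n : ℕ) (Δ : Finset (Fin n)) (σ : MvPolynomial (Fin n) ℝ) : Prop :=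
  ∃ (r : ℕ) (p : Fin r → MvPolynomial (Fin n) ℝ),
    (∀ l, p l ∈ MvPolynomial.supported ℝ (↑Δ : Set (Fin n))) ∧ σ = ∑ l, p l ^ 2

/-- Degree-`2k` truncation `Ideal_{Δ}[h]_{2k}`. -/
def IdealTrunc (n : ℕ) (Δ : Finset (Fin n)) {ℓ : ℕ}
    (h : Fin ℓ → MvPolynomial (Fin n) ℝ) (k : ℕ) : Set (MvPolynomial (Fin n) ℝ) :=
  { q | ∃ φ : Fin ℓ → MvPolynomial (Fin n) ℝ,
      (∀ j, φ j ∈ MvPolynomial.supported ℝ (↑Δ : Set (Fin n))) ∧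
      (∀ j, (φ j * h j).totalDegree ≤ 2 * k) ∧ q = ∑ j, φ j * h j }

/-- Degree-`2k` truncation of the preordering, `Pre_{Δ}[g]_{2k}`. -/
def PreTrunc (n : ℕ) (Δ : Finset (Fin n)) {s : ℕ}
    (g : Fin s → MvPolynomial (Fin n) ℝ) (k : ℕ) : Set (MvPolynomial (Fin n) ℝ) :=
  { q | ∃ σ : Finset (Fin s) → MvPolynomial (Fin n) ℝ,
      (∀ J, IsSOSIn n Δ (σ J)) ∧
      (∀ J, (σ J * ∏ j ∈ J, g j).totalDegree ≤ 2 * k) ∧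
      q = ∑ J : Finset (Fin s), σ J * ∏ j ∈ J, g j }

/-- The Minkowski sum `G_1 + ⋯ + G_m` of a family of subsets of `ℝ[x]`. -/
def SpaSum {n m : ℕ} (G : Fin m → Set (MvPolynomial (Fin n) ℝ)) :
    Set (MvPolynomial (Fin n) ℝ) :=
  { q | ∃ t : Fin m → MvPolynomial (Fin n) ℝ, (∀ i, t i ∈ G i) ∧ q = ∑ i, t i }

lemma idealTrunc_supported {n ℓ : ℕ} (Δ : Finset (Fin n))
    (h : Fin ℓ → MvPolynomial (Fin n) ℝ)
    (hh : ∀ j, h j ∈ MvPolynomial.supported ℝ (↑Δ : Set (Fin n))) (k : ℕ)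
    {q : MvPolynomial (Fin n) ℝ} (hq : q ∈ IdealTrunc n Δ h k) :
    q ∈ MvPolynomial.supported ℝ (↑Δ : Set (Fin n)) := by
  obtain ⟨φ, hφ, -, rfl⟩ := hq
  exact Subalgebra.sum_mem _ fun j _ => mul_mem (hφ j) (hh j)

lemma preTrunc_supported {n s : ℕ} (Δ : Finset (Fin n))
    (g : Fin s → MvPolynomial (Fin n) ℝ)
    (hg : ∀ j, g j ∈ MvPolynomial.supported ℝ (↑Δ : Set (Fin n))) (k : ℕ)
    {q : MvPolynomial (Fin n) ℝ} (hq : q ∈ PreTrunc n Δ g k) :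
    q ∈ MvPolynomial.supported ℝ (↑Δ : Set (Fin n)) := by
  obtain ⟨σ, hσ, -, rfl⟩ := hq
  refine Subalgebra.sum_mem _ fun J _ => mul_mem ?_ (prod_mem fun j _ => hg j)
  obtain ⟨r, p, hp, hpe⟩ := hσ J
  exact hpe ▸ Subalgebra.sum_mem _ fun l _ => pow_mem (hp l) 2

theorem stmt_15
    (n m : ℕ) (hn : 1 ≤ n) (hm : 1 ≤ m)
    (Δ : Fin m → Finset (Fin n))
    (ℓ s : Fin m → ℕ)
    (f : Fin m → MvPolynomial (Fin n) ℝ)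
    (h : (i : Fin m) → Fin (ℓ i) → MvPolynomial (Fin n) ℝ)
    (g : (i : Fin m) → Fin (s i) → MvPolynomial (Fin n) ℝ)
    (hf : ∀ i, f i ∈ MvPolynomial.supported ℝ (↑(Δ i) : Set (Fin n)))
    (hh : ∀ i j, h i j ∈ MvPolynomial.supported ℝ (↑(Δ i) : Set (Fin n)))
    (hg : ∀ i j, g i j ∈ MvPolynomial.supported ℝ (↑(Δ i) : Set (Fin n)))
    (K : Set (Fin n → ℝ))
    (hKdef : K = { x | (∀ i j, MvPolynomial.eval x (h i j) = 0) ∧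
        (∀ i j, 0 ≤ MvPolynomial.eval x (g i j)) })
    (fmin : ℝ)
    (hfmin : IsGLB ((fun x => MvPolynomial.eval x (∑ i, f i)) '' K) fmin)
    (k : ℕ)
    -- `k ≥ k₀`:
    (hkf : (∑ i, f i).totalDegree ≤ 2 * k)
    (hkh : ∀ i j, (h i j).totalDegree ≤ 2 * k)
    (hkg : ∀ i j, (g i j).totalDegree ≤ 2 * k) :
    ((∑ i, f i) - MvPolynomial.C fmin ∈
        SpaSum (fun i => IdealTrunc n (Δ i) (h i) k) +
          SpaSum (fun i => PreTrunc n (Δ i) (g i) k)) ↔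
      ∃ p : Fin m → MvPolynomial (Fin n) ℝ,
        (∀ i, p i ∈ MvPolynomial.supported ℝ (↑(Δ i) : Set (Fin n))) ∧
        (∑ i, p i) + MvPolynomial.C fmin = 0 ∧
        ∀ i, f i + p i ∈ IdealTrunc n (Δ i) (h i) k + PreTrunc n (Δ i) (g i) k := by
  constructor
  · intro hmem
    obtain ⟨A, hA, B, hB, hab⟩ := Set.mem_add.mp hmem
    obtain ⟨a, ha, rfl⟩ := hA
    obtain ⟨b, hb, rfl⟩ := hB
    refine ⟨fun i => a i + b i - f i, ?_, ?_, ?_⟩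
    · intro i
      exact sub_mem (add_mem (idealTrunc_supported _ _ (hh i) _ (ha i))
        (preTrunc_supported _ _ (hg i) _ (hb i))) (hf i)
    · rw [Finset.sum_sub_distrib, Finset.sum_add_distrib]
      linear_combination hab
    · intro i
      have : f i + (a i + b i - f i) = a i + b i := by ring
      rw [this]
      exact Set.add_mem_add (ha i) (hb i)
  · rintro ⟨p, hp, hsum, hmem⟩
    choose a ha b hb hab using fun i => Set.mem_add.mp (hmem i)
    refine Set.mem_add.mpr ⟨∑ i, a i, ⟨a, ha, rfl⟩, ∑ i, b i, ⟨b, hb, rfl⟩, ?_⟩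
    have h1 : ∑ i, (a i + b i) = ∑ i, (f i + p i) :=
      Finset.sum_congr rfl fun i _ => hab i
    rw [Finset.sum_add_distrib, Finset.sum_add_distrib] at h1
    linear_combination h1 + hsum
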